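/- For every integer n ≥ 2, the identity ∑_{k=1}^{n-1} C(n,k) · (2k-3)!! · (2n-2k-3)!! = 2·(2n-3)!! holds, where (-1)!! = 1 and (2m-1)!! denotes the product of all odd positive integers up to 2m-1. -/

import Mathlib

open Nat

lemma dfa (j : ℕ) (hj : 1 ≤ j) :
    (2 * (j + 1) - 3)‼ = (2 * j - 1) * (2 * j - 3)‼ := by
  obtain ⟨i, rfl⟩ : ∃ i, j = i + 1 := ⟨j - 1, by omega⟩
  cases i with
  | zero => decide
  | succ m =>
    have h1 : 2 * (m + 1 + 1 + 1) - 3 = 2 * m + 1 + 2 := by omega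
    have h2 : 2 * (m + 1 + 1) - 1 = 2 * m + 1 + 2 := by omega
    have h3 : 2 * (m + 1 + 1) - 3 = 2 * m + 1 := by omega
    rw [h1, h2, h3, Nat.doubleFactorial_add_two]

theorem stmt0 (n : ℕ) (hn : 2 ≤ n) :
    ∑ k ∈ Finset.Ico 1 n, n.choose k * (2 * k - 3)‼ * (2 * (n - k) - 3)‼
      = 2 * (2 * n - 3)‼ := by
  induction n, hn using Nat.le_induction with
  | base => decide
  | succ n hn ih =>
    have key : ∑ k ∈ Finset.Ico 1 (n+1), (n+1).choose k * (2*k-3)‼ * (2*(n+1-k)-3)‼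
        = (∑ k ∈ Finset.Ico 1 (n+1), n.choose k * (2*k-3)‼ * (2*(n+1-k)-3)‼)
          + ∑ k ∈ Finset.Ico 1 (n+1), n.choose (k-1) * (2*k-3)‼ * (2*(n+1-k)-3)‼ := by
      rw [← Finset.sum_add_distrib]
      refine Finset.sum_congr rfl fun k hk => ?_
      have hk1 : 1 ≤ k := (Finset.mem_Ico.mp hk).1
      obtain ⟨m, rfl⟩ : ∃ m, k = m + 1 := ⟨k - 1, by omega⟩
      rw [Nat.choose_succ_succ]
      simp only [Nat.add_sub_cancel]
      ring
    have hA : ∑ k ∈ Finset.Ico 1 (n+1), n.choose k * (2*k-3)‼ * (2*(n+1-k)-3)‼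
        = (∑ k ∈ Finset.Ico 1 n, (2*(n-k)-1) * (n.choose k * (2*k-3)‼ * (2*(n-k)-3)‼))
          + (2*n-3)‼ := by
      rw [Finset.sum_Ico_succ_top (by omega : 1 ≤ n)]
      congr 1
      · refine Finset.sum_congr rfl fun k hk => ?_
        have hk1 : 1 ≤ k ∧ k < n := Finset.mem_Ico.mp hk
        have h : n + 1 - k = (n - k) + 1 := by omega
        rw [h, dfa (n-k) (by omega)]
        ring
      · have h : n + 1 - n = 1 := by omega
        simp [h, Nat.choose_self]
    have hB : ∑ k ∈ Finset.Ico 1 (n+1), n.choose (k-1) * (2*k-3)‼ * (2*(n+1-k)-3)‼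
        = (∑ k ∈ Finset.Ico 1 n, (2*k-1) * (n.choose k * (2*k-3)‼ * (2*(n-k)-3)‼))
          + (2*n-3)‼ := by
      rw [Finset.sum_Ico_eq_sum_range]
      simp only [Nat.add_sub_cancel, Nat.add_sub_cancel_left]
      rw [Finset.range_eq_Ico, Finset.sum_eq_sum_Ico_succ_bot (by omega : 0 < n)]
      rw [add_comm]
      congr 1
      · refine Finset.sum_congr rfl fun k hk => ?_
        have hk1 : 1 ≤ k ∧ k < n := Finset.mem_Ico.mp hk
        have h3 : n + 1 - (1 + k) = n - k := by omega
        have h4 : 1 + k = k + 1 := by omega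
        rw [h3, h4, dfa k (by omega)]
        ring
      · have h5 : 1 + 0 - 1 = 0 := rfl
        have h6 : n + 1 - (1 + 0) = n := by omega
        simp [h5, h6]
    rw [key, hA, hB]
    have comb : (∑ k ∈ Finset.Ico 1 n, (2*(n-k)-1) * (n.choose k * (2*k-3)‼ * (2*(n-k)-3)‼))
        + ∑ k ∈ Finset.Ico 1 n, (2*k-1) * (n.choose k * (2*k-3)‼ * (2*(n-k)-3)‼)
        = (2*n-2) * ∑ k ∈ Finset.Ico 1 n, n.choose k * (2*k-3)‼ * (2*(n-k)-3)‼ := by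
      rw [← Finset.sum_add_distrib, Finset.mul_sum]
      refine Finset.sum_congr rfl fun k hk => ?_
      have hk1 : 1 ≤ k ∧ k < n := Finset.mem_Ico.mp hk
      have h : (2*(n-k)-1) + (2*k-1) = 2*n-2 := by omega
      rw [← add_mul, h]
    have e : ∀ a b d : ℕ, a + d + (b + d) = (a + b) + 2*d := fun a b d => by ring
    rw [e, comb, ih, dfa n (by omega)]
    have h : 2*n-1 = (2*n-2) + 1 := by omega
    rw [h]; ring
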